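/- arXiv:1906.03571 — 11 statements merged into one kernel-verified Lean document; each statement's English description precedes it below -/
import Mathlib

section
/- Let 0 < k ≤ 1 and m ≥ 1 be real numbers. Then for all real t with 0 ≤ t ≤ k, we have (1+t)^m ≥ 1 + ((1+k)^m - 1)/k^m · t^m. -/
open Real

lemma rpow_diff_mono (m : ℝ) (hm : 1 ≤ m) {a b d : ℝ} (ha : 0 ≤ a) (hab : a ≤ b)
    (hd : 0 ≤ d) : (a + d) ^ m - a ^ m ≤ (b + d) ^ m - b ^ m := by
  rcases eq_or_lt_of_le hd with rfl | hd
  · simp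
  rcases eq_or_lt_of_le hab with rfl | hab
  · exact le_refl _
  have hb : 0 ≤ b := ha.trans hab.le
  have hcv := convexOn_rpow hm
  have h1 : ((a + d) ^ m - a ^ m) / ((a + d) - a) ≤ ((b + d) ^ m - a ^ m) / ((b + d) - a) := by
    exact hcv.secant_mono (Set.mem_Ici.2 ha) (Set.mem_Ici.2 (by linarith))
      (Set.mem_Ici.2 (by linarith)) (by linarith) (by linarith) (by linarith)
  have h2 : (a ^ m - (b + d) ^ m) / (a - (b + d)) ≤ (b ^ m - (b + d) ^ m) / (b - (b + d)) := by
    exact hcv.secant_mono (Set.mem_Ici.2 (by linarith)) (Set.mem_Ici.2 ha)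
      (Set.mem_Ici.2 hb) (by linarith) (by linarith) hab.le
  have h2' : ((b + d) ^ m - a ^ m) / ((b + d) - a) ≤ ((b + d) ^ m - b ^ m) / d := by
    have e1 : (a ^ m - (b + d) ^ m) / (a - (b + d)) = ((b + d) ^ m - a ^ m) / ((b + d) - a) := by
      rw [← neg_div_neg_eq]; ring_nf
    have e2 : (b ^ m - (b + d) ^ m) / (b - (b + d)) = ((b + d) ^ m - b ^ m) / d := by
      rw [← neg_div_neg_eq]; ring_nf
    rw [e1, e2] at h2
    exact h2
  have h3 : ((a + d) ^ m - a ^ m) / d ≤ ((b + d) ^ m - b ^ m) / d := by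
    have : (a + d) - a = d := by ring
    rw [this] at h1
    exact h1.trans h2'
  exact (div_le_div_iff_of_pos_right hd).1 h3

theorem stmt_0 (k m t : ℝ) (hk0 : 0 < k) (hk1 : k ≤ 1) (hm : 1 ≤ m)
    (ht0 : 0 ≤ t) (htk : t ≤ k) :
    (1 + t) ^ m ≥ 1 + ((1 + k) ^ m - 1) / k ^ m * t ^ m := by
  have hkm : (0:ℝ) < k ^ m := rpow_pos_of_pos hk0 m
  have key : (t + k * t) ^ m - t ^ m ≤ (k + k * t) ^ m - k ^ m :=
    rpow_diff_mono m hm ht0 htk (by positivity)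
  have e1 : (t + k * t) ^ m = t ^ m * (1 + k) ^ m := by
    rw [← Real.mul_rpow ht0 (by linarith)]; ring_nf
  have e2 : (k + k * t) ^ m = k ^ m * (1 + t) ^ m := by
    rw [← Real.mul_rpow hk0.le (by linarith)]; ring_nf
  rw [e1, e2] at key
  have : ((1 + k) ^ m - 1) / k ^ m * t ^ m ≤ (1 + t) ^ m - 1 := by
    rw [div_mul_eq_mul_div, div_le_iff₀ hkm]
    nlinarith
  linarith
end

section
/- Let 0 < k ≤ 1 and 0 ≤ n ≤ 1 be real numbers. Then for all real t with 0 ≤ t ≤ k, we have (1+t)^n ≤ 1 + ((1+k)^n - 1)/k^n · t^n. -/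
open Real

lemma rpow_concave_incr (n a b c : ℝ) (hn0 : 0 ≤ n) (hn1 : n ≤ 1)
    (ha : 0 ≤ a) (hab : a ≤ b) (hc : 0 ≤ c) :
    (b + c) ^ n + a ^ n ≤ (a + c) ^ n + b ^ n := by
  rcases eq_or_lt_of_le (show a ≤ b + c by linarith) with heq | hlt
  · have hc0 : c = 0 := by linarith
    have hab0 : a = b := by linarith
    subst hc0; subst hab0; simp
  · set D : ℝ := b + c - a with hD
    have hD0 : 0 < D := by simp only [hD]; linarith
    set θ : ℝ := (b - a) / D with hθ
    set μ : ℝ := c / D with hμ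
    have hθ0 : 0 ≤ θ := div_nonneg (by linarith) hD0.le
    have hμ0 : 0 ≤ μ := div_nonneg hc hD0.le
    have hsum : θ + μ = 1 := by rw [hθ, hμ, ← add_div, div_eq_one_iff_eq hD0.ne', hD]; ring
    have hcon := Real.concaveOn_rpow hn0 hn1
    have hbc : (0:ℝ) ≤ b + c := by linarith
    have h1 := hcon.2 (Set.mem_Ici.2 ha) (Set.mem_Ici.2 hbc) hμ0 hθ0 (by linarith)
    have h2 := hcon.2 (Set.mem_Ici.2 ha) (Set.mem_Ici.2 hbc) hθ0 hμ0 hsum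
    simp only [smul_eq_mul] at h1 h2
    have e1 : μ * a + θ * (b + c) = b := by rw [hθ, hμ, div_mul_eq_mul_div, div_mul_eq_mul_div, ← add_div, div_eq_iff hD0.ne', hD]; ring
    have e2 : θ * a + μ * (b + c) = a + c := by rw [hθ, hμ, div_mul_eq_mul_div, div_mul_eq_mul_div, ← add_div, div_eq_iff hD0.ne', hD]; ring
    rw [e1] at h1
    rw [e2] at h2
    have hμ1 : μ = 1 - θ := by linarith
    rw [hμ1] at h1 h2
    nlinarith [h1, h2]

theorem stmt_1 (k n t : ℝ) (hk0 : 0 < k) (hk1 : k ≤ 1) (hn0 : 0 ≤ n) (hn1 : n ≤ 1)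
    (ht0 : 0 ≤ t) (htk : t ≤ k) :
    (1 + t) ^ n ≤ 1 + ((1 + k) ^ n - 1) / k ^ n * t ^ n := by
  have key := rpow_concave_incr n t k (t * k) hn0 hn1 ht0 htk (by positivity)
  have hbc : k + t * k = (1 + t) * k := by ring
  have hac : t + t * k = (1 + k) * t := by ring
  rw [hbc, hac, Real.mul_rpow (by linarith) hk0.le, Real.mul_rpow (by linarith) ht0] at key
  have hkn : (0:ℝ) < k ^ n := Real.rpow_pos_of_pos hk0 n
  rw [div_mul_eq_mul_div, ← sub_le_iff_le_add', le_div_iff₀ hkn]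
  nlinarith [key]
end

section
/- Let 0 < k ≤ 1 and β ≥ 2 be real numbers, and let a, b, c ≥ 0 be nonnegative reals satisfying c² ≥ a² + b² and b² ≤ k·a². Then c^β ≥ a^β + ((1+k)^{β/2} - 1)/k^{β/2} · b^β. -/
open Real

lemma diff_mono_aux {μ d : ℝ} (hμ : 1 ≤ μ) (hd : 0 ≤ d) {s t : ℝ}
    (hs : 0 ≤ s) (hst : s ≤ t) :
    (s + d) ^ μ - s ^ μ ≤ (t + d) ^ μ - t ^ μ := by
  set F : ℝ → ℝ := fun x => (x + d) ^ μ - x ^ μ with hF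
  have hder : ∀ x : ℝ, HasDerivAt F (μ * (x + d) ^ (μ - 1) * 1 - μ * x ^ (μ - 1)) x := by
    intro x
    have h1 : HasDerivAt (fun x : ℝ => (x + d) ^ μ) (μ * (x + d) ^ (μ - 1) * 1) x :=
      (Real.hasDerivAt_rpow_const (Or.inr hμ)).comp x ((hasDerivAt_id x).add_const d)
    have h2 : HasDerivAt (fun x : ℝ => x ^ μ) (μ * x ^ (μ - 1)) x :=
      Real.hasDerivAt_rpow_const (Or.inr hμ)
    exact h1.sub h2
  have hmono : MonotoneOn F (Set.Ici 0) := by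
    apply monotoneOn_of_deriv_nonneg (convex_Ici 0)
    · exact fun x _ => ((hder x).differentiableAt).continuousAt.continuousWithinAt
    · exact fun x _ => ((hder x).differentiableAt).differentiableWithinAt
    · intro x hx
      rw [interior_Ici] at hx
      rw [(hder x).deriv]
      have h0 : (0:ℝ) ≤ μ - 1 := by linarith
      have : x ^ (μ - 1) ≤ (x + d) ^ (μ - 1) :=
        Real.rpow_le_rpow (le_of_lt hx) (by linarith) h0
      nlinarith [Real.rpow_nonneg (le_of_lt hx) (μ - 1), this]
  exact hmono hs (le_trans hs hst) hst

theorem stmt_4 (k β a b c : ℝ) (hk0 : 0 < k) (hk1 : k ≤ 1) (hβ : 2 ≤ β)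
    (ha : 0 ≤ a) (hb : 0 ≤ b) (hc : 0 ≤ c)
    (hmono : c ^ 2 ≥ a ^ 2 + b ^ 2) (hcond : b ^ 2 ≤ k * a ^ 2) :
    c ^ β ≥ a ^ β + ((1 + k) ^ (β / 2) - 1) / k ^ (β / 2) * b ^ β := by
  set μ := β / 2 with hμdef
  have hμ1 : 1 ≤ μ := by simp [hμdef]; linarith
  have hμ0 : 0 ≤ μ := by linarith
  have ha2 : (0:ℝ) ≤ a ^ 2 := sq_nonneg a
  have hb2 : (0:ℝ) ≤ b ^ 2 := sq_nonneg b
  -- rewrite x^β = (x^2)^μ for nonneg x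
  have hpow : ∀ x : ℝ, 0 ≤ x → x ^ β = (x ^ 2) ^ μ := by
    intro x hx
    rw [← Real.rpow_natCast x 2, ← Real.rpow_mul hx]
    norm_num [hμdef]
    ring_nf
  -- step 1 : c^β ≥ (a²+b²)^μ
  have step1 : (a ^ 2 + b ^ 2) ^ μ ≤ c ^ β := by
    rw [hpow c hc]
    exact Real.rpow_le_rpow (by positivity) hmono hμ0
  -- key inequality
  have key := diff_mono_aux hμ1 (by positivity : (0:ℝ) ≤ k * b ^ 2) hb2 hcond
  -- rewrite key
  have e1 : (k * a ^ 2 + k * b ^ 2) ^ μ = k ^ μ * (a ^ 2 + b ^ 2) ^ μ := by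
    rw [← mul_add, Real.mul_rpow hk0.le (by positivity)]
  have e2 : (k * a ^ 2) ^ μ = k ^ μ * (a ^ 2) ^ μ := Real.mul_rpow hk0.le ha2
  have e3 : (b ^ 2 + k * b ^ 2) ^ μ = (1 + k) ^ μ * (b ^ 2) ^ μ := by
    rw [show b ^ 2 + k * b ^ 2 = (1 + k) * b ^ 2 by ring,
      Real.mul_rpow (by linarith) hb2]
  rw [e1, e2, e3] at key
  have hkμ : 0 < k ^ μ := Real.rpow_pos_of_pos hk0 μ
  have step2 : ((1 + k) ^ μ - 1) / k ^ μ * (b ^ 2) ^ μ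
      ≤ (a ^ 2 + b ^ 2) ^ μ - (a ^ 2) ^ μ := by
    rw [div_mul_eq_mul_div, div_le_iff₀ hkμ]
    nlinarith [key]
  rw [hpow a ha, hpow b hb]
  linarith
end

section
/- Let 0 < k ≤ 1 and β ≥ 2 be real numbers. Let c ≥ 0 and a₁,…,a_{N-1} ≥ 0 be nonnegative reals such that c² ≥ a₁² + a₂² + ⋯ + a_{N-1}² and, setting c_i² = a_{i+1}² + ⋯ + a_{N-1}², assume k·a_i² ≥ c_i² for all i = 1,…,N-2. Then, with h = ((1+k)^{β/2} - 1)/k^{β/2}, we have c^β ≥ a₁^β + h·a₂^β + h²·a₃^β + ⋯ + h^{N-2}·a_{N-1}^β. -/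
lemma maj (s : ℝ) (hs : 1 ≤ s) (A B C D : ℝ) (hD : 0 ≤ D) (hDB : D ≤ B)
    (hDC : D ≤ C) (hBA : B ≤ A) (hCA : C ≤ A) (hsum : A + D = B + C) :
    B ^ s + C ^ s ≤ A ^ s + D ^ s := by
  rcases eq_or_lt_of_le (hDB.trans hBA) with h | h
  · have hBe : B = A := le_antisymm hBA (h ▸ hDB)
    have hCe : C = A := by linarith
    have hDe : D = A := h
    rw [hBe, hCe, hDe]
  · set l : ℝ := (B - D) / (A - D) with hl
    have hAD : 0 < A - D := by linarith
    have hl0 : 0 ≤ l := div_nonneg (by linarith) hAD.le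
    have hl1 : l ≤ 1 := by
      rw [hl, div_le_one hAD]; linarith
    have hb : l * A + (1 - l) * D = B := by
      have hlAD : l * (A - D) = B - D := by rw [hl]; exact div_mul_cancel₀ _ hAD.ne'
      linarith
    have hc : (1 - l) * A + l * D = C := by
      field_simp [hl]; nlinarith [hsum]
    have hconv := (convexOn_rpow hs).2
    have h1 := hconv (Set.mem_Ici.mpr (hD.trans (hDB.trans hBA)))
      (Set.mem_Ici.mpr hD) hl0 (by linarith : (0:ℝ) ≤ 1 - l) (by ring)
    have h2 := hconv (Set.mem_Ici.mpr (hD.trans (hDB.trans hBA)))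
      (Set.mem_Ici.mpr hD) (by linarith : (0:ℝ) ≤ 1 - l) hl0 (by ring)
    simp only [smul_eq_mul] at h1 h2
    rw [hb] at h1
    rw [hc] at h2
    linarith

lemma key (k s : ℝ) (hk0 : 0 < k) (hs : 1 ≤ s) (t : ℝ) (ht0 : 0 ≤ t)
    (htk : t ≤ k) :
    1 + ((1 + k) ^ s - 1) / k ^ s * t ^ s ≤ (1 + t) ^ s := by
  rcases ht0.eq_or_lt with h | h
  · simp [← h, Real.zero_rpow (show s ≠ 0 by linarith)]
  · have hmaj := maj s hs (k * (1 + t)) (t * (1 + k)) k t h.le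
      (by nlinarith) htk (by nlinarith) (by nlinarith) (by ring)
    rw [Real.mul_rpow (by linarith) (by linarith),
      Real.mul_rpow hk0.le (by linarith)] at hmaj
    have hks : (0:ℝ) < k ^ s := Real.rpow_pos_of_pos hk0 s
    have hts : (0:ℝ) < t ^ s := Real.rpow_pos_of_pos h s
    have h1 : ((1 + k) ^ s - 1) * t ^ s ≤ ((1 + t) ^ s - 1) * k ^ s := by
      nlinarith
    have h2 : ((1 + k) ^ s - 1) / k ^ s * t ^ s ≤ (1 + t) ^ s - 1 := by
      rw [div_mul_eq_mul_div, div_le_iff₀ hks]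
      linarith
    linarith

-- squared-variables version
lemma key2 (k s : ℝ) (hk0 : 0 < k) (hs : 1 ≤ s) (X Y : ℝ) (hX : 0 ≤ X)
    (hY : 0 ≤ Y) (hYX : Y ≤ k * X) :
    X ^ s + ((1 + k) ^ s - 1) / k ^ s * Y ^ s ≤ (X + Y) ^ s := by
  rcases hX.eq_or_lt with h | h
  · have hY0 : Y = 0 := le_antisymm (by nlinarith) hY
    rw [← h, hY0, Real.zero_rpow (by linarith), add_zero,
      Real.zero_rpow (by linarith), mul_zero, add_zero]
  · have ht0 : 0 ≤ Y / X := div_nonneg hY h.le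
    have htk : Y / X ≤ k := by rw [div_le_iff₀ h]; linarith
    have hkey := key k s hk0 hs (Y / X) ht0 htk
    have := mul_le_mul_of_nonneg_right hkey (Real.rpow_pos_of_pos h s).le
    calc X ^ s + ((1 + k) ^ s - 1) / k ^ s * Y ^ s
        = (1 + ((1 + k) ^ s - 1) / k ^ s * (Y / X) ^ s) * X ^ s := by
          rw [Real.div_rpow hY h.le]
          field_simp
      _ ≤ (1 + Y / X) ^ s * X ^ s := this
      _ = (X + Y) ^ s := by
          rw [← Real.mul_rpow (by positivity) h.le]
          congr 1
          field_simp

lemma sq_rpow_half (β : ℝ) (x : ℝ) (hx : 0 ≤ x) : (x ^ 2) ^ (β / 2) = x ^ β := by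
  rw [← Real.rpow_natCast x 2, ← Real.rpow_mul hx]
  congr 1
  push_cast
  ring

lemma aux (k β : ℝ) (hk0 : 0 < k) (hβ : 2 ≤ β) (n : ℕ) :
    ∀ (m : ℕ) (c : ℝ) (a : ℕ → ℝ), 0 ≤ c →
    (∀ i ∈ Finset.Icc m (m + n), 0 ≤ a i) →
    (∑ i ∈ Finset.Icc m (m + n), (a i) ^ 2) ≤ c ^ 2 →
    (∀ i, m ≤ i → i < m + n →
      (∑ j ∈ Finset.Icc (i + 1) (m + n), (a j) ^ 2) ≤ k * (a i) ^ 2) →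
    ∑ i ∈ Finset.Icc m (m + n),
      (((1 + k) ^ (β / 2) - 1) / k ^ (β / 2)) ^ (i - m) * (a i) ^ β ≤ c ^ β := by
  induction n with
  | zero =>
    intro m c a hc ha hm _
    simp only [add_zero, Finset.Icc_self, Finset.sum_singleton] at *
    rw [Nat.sub_self, pow_zero, one_mul]
    have ham : 0 ≤ a m := ha m (by simp)
    have : a m ≤ c := by nlinarith
    exact Real.rpow_le_rpow ham this (by linarith)
  | succ n ih =>
    intro m c a hc ha hm hcond
    have hs : 1 ≤ β / 2 := by linarith
    set h : ℝ := ((1 + k) ^ (β / 2) - 1) / k ^ (β / 2) with hdef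
    have hh0 : 0 ≤ h := by
      apply div_nonneg _ (Real.rpow_nonneg hk0.le _)
      have : (1:ℝ) ^ (β / 2) ≤ (1 + k) ^ (β / 2) :=
        Real.rpow_le_rpow (by norm_num) (by linarith) (by linarith)
      rw [Real.one_rpow] at this
      linarith
    have hsplit : Finset.Icc m (m + (n + 1)) =
        insert m (Finset.Icc (m + 1) (m + (n + 1))) := by
      ext x
      simp only [Finset.mem_Icc, Finset.mem_insert]
      omega
    have hnotmem : m ∉ Finset.Icc (m + 1) (m + (n + 1)) := by simp
    set Y : ℝ := ∑ j ∈ Finset.Icc (m + 1) (m + (n + 1)), (a j) ^ 2 with hY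
    have hY0 : 0 ≤ Y := Finset.sum_nonneg fun j _ => sq_nonneg _
    have hYk : Y ≤ k * (a m) ^ 2 := hcond m le_rfl (by omega)
    have ham : 0 ≤ a m := ha m (by simp)
    -- IH applied with sqrt Y
    have hIH := ih (m + 1) (Real.sqrt Y) a (Real.sqrt_nonneg Y)
      (fun i hi => ha i (by simp at hi ⊢; omega))
      (by rw [Real.sq_sqrt hY0, show m + 1 + n = m + (n + 1) by omega])
      (fun i hi hi' => by
        rw [show m + 1 + n = m + (n + 1) by omega]
        exact hcond i (by omega) (by omega))
    rw [show m + 1 + n = m + (n + 1) by omega] at hIH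
    have hsqrtβ : (Real.sqrt Y) ^ β = Y ^ (β / 2) := by
      rw [← sq_rpow_half β _ (Real.sqrt_nonneg Y), Real.sq_sqrt hY0]
    -- key2
    have hkey := key2 k (β / 2) hk0 hs ((a m) ^ 2) Y (sq_nonneg _) hY0 hYk
    have hcβ : (((a m) ^ 2) + Y) ^ (β / 2) ≤ c ^ β := by
      rw [← sq_rpow_half β c hc]
      apply Real.rpow_le_rpow (by positivity) _ (by linarith)
      rw [hsplit, Finset.sum_insert hnotmem] at hm
      exact hm
    rw [sq_rpow_half β _ ham] at hkey
    -- assemble the sum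
    rw [hsplit, Finset.sum_insert hnotmem, Nat.sub_self, pow_zero, one_mul]
    have hshift : ∑ i ∈ Finset.Icc (m + 1) (m + (n + 1)), h ^ (i - m) * (a i) ^ β
        = h * ∑ i ∈ Finset.Icc (m + 1) (m + (n + 1)), h ^ (i - (m + 1)) * (a i) ^ β := by
      rw [Finset.mul_sum]
      apply Finset.sum_congr rfl
      intro i hi
      simp only [Finset.mem_Icc] at hi
      rw [show i - m = (i - (m + 1)) + 1 by omega, pow_succ]
      ring
    rw [hshift]
    have : h * ∑ i ∈ Finset.Icc (m + 1) (m + (n + 1)), h ^ (i - (m + 1)) * (a i) ^ β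
        ≤ h * Y ^ (β / 2) := by
      apply mul_le_mul_of_nonneg_left _ hh0
      rw [← hsqrtβ]
      exact hIH
    calc (a m) ^ β + h * ∑ i ∈ Finset.Icc (m + 1) (m + (n + 1)),
            h ^ (i - (m + 1)) * (a i) ^ β
        ≤ (a m) ^ β + h * Y ^ (β / 2) := by linarith
      _ ≤ (((a m) ^ 2) + Y) ^ (β / 2) := hkey
      _ ≤ c ^ β := hcβ

theorem stmt_5 (k β : ℝ) (hk0 : 0 < k) (hk1 : k ≤ 1) (hβ : 2 ≤ β)
    (N : ℕ) (hN : 2 ≤ N) (c : ℝ) (a : ℕ → ℝ)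
    (hc : 0 ≤ c) (ha : ∀ i ∈ Finset.Icc 1 (N - 1), 0 ≤ a i)
    (hmono : c ^ 2 ≥ ∑ i ∈ Finset.Icc 1 (N - 1), (a i) ^ 2)
    (hcond : ∀ i ∈ Finset.Icc 1 (N - 2),
      k * (a i) ^ 2 ≥ ∑ j ∈ Finset.Icc (i + 1) (N - 1), (a j) ^ 2) :
    c ^ β ≥ ∑ i ∈ Finset.Icc 1 (N - 1),
      (((1 + k) ^ (β / 2) - 1) / k ^ (β / 2)) ^ (i - 1) * (a i) ^ β := by
  have hEq : 1 + (N - 2) = N - 1 := by omega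
  have := aux k β hk0 hβ (N - 2) 1 c a hc
    (by rw [hEq]; exact ha)
    (by rw [hEq]; exact hmono)
    (fun i hi hi' => by
      rw [hEq]
      exact hcond i (by simp only [Finset.mem_Icc]; omega))
  rw [hEq] at this
  exact this
end

section
/- Let 0 < k ≤ 1 and 0 ≤ β ≤ 2 be real numbers, and let c, a₁,…,a_{N-1} ≥ 0 be nonnegative reals such that c² ≤ a₁² + ⋯ + a_{N-1}² and, setting c_i² = a_{i+1}² + ⋯ + a_{N-1}², assume k·a_i² ≥ c_i² for all i = 1,…,N-2. Then, with h = ((1+k)^{β/2} - 1)/k^{β/2}, we have c^β ≤ a₁^β + h·a₂^β + h²·a₃^β + ⋯ + h^{N-2}·a_{N-1}^β. -/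
open Real Finset

private lemma sum_shift8 (f : ℕ → ℝ) (m M : ℕ) :
    ∑ j ∈ Finset.Icc (m + 1) (M + 1), f j = ∑ i ∈ Finset.Icc m M, f (i + 1) := by
  rw [show m + 1 = 1 + m by ring, show M + 1 = 1 + M by ring, ← Finset.map_add_left_Icc,
    Finset.sum_map]
  refine Finset.sum_congr rfl fun i _ => ?_
  rw [addLeftEmbedding_apply, add_comm]

private lemma incr8 {p : ℝ} (hp0 : 0 ≤ p) (hp1 : p ≤ 1) {a b d : ℝ} (ha : 0 ≤ a)
    (hab : a ≤ b) (hd : 0 ≤ d) :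
    a ^ p + (b + d) ^ p ≤ (a + d) ^ p + b ^ p := by
  by_cases hdeg : b + d ≤ a
  · have hb : b = a := le_antisymm (by linarith) hab
    have hd0 : d = 0 := by linarith
    subst hb; subst hd0; simp
  push_neg at hdeg
  have hden : 0 < b + d - a := by linarith
  set lam : ℝ := d / (b + d - a) with hlam
  set mu : ℝ := (b - a) / (b + d - a) with hmu
  have hlam0 : 0 ≤ lam := div_nonneg hd hden.le
  have hmu0 : 0 ≤ mu := div_nonneg (by linarith) hden.le
  have hsum : mu + lam = 1 := by rw [hlam, hmu]; field_simp; ring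
  have hsum' : lam + mu = 1 := by linarith
  have C := Real.concaveOn_rpow hp0 hp1
  have hmem1 : a ∈ Set.Ici (0:ℝ) := ha
  have hmem2 : b + d ∈ Set.Ici (0:ℝ) := Set.mem_Ici.2 (by linarith)
  have h1 := C.2 hmem1 hmem2 hmu0 hlam0 hsum
  have h2 := C.2 hmem1 hmem2 hlam0 hmu0 hsum'
  simp only [smul_eq_mul] at h1 h2
  have e1 : mu * a + lam * (b + d) = a + d := by rw [hlam, hmu]; field_simp; ring
  have e2 : lam * a + mu * (b + d) = b := by rw [hlam, hmu]; field_simp; ring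
  rw [e1] at h1
  rw [e2] at h2
  have key : a ^ p + (b + d) ^ p =
      (mu * a ^ p + lam * (b + d) ^ p) + (lam * a ^ p + mu * (b + d) ^ p) := by
    linear_combination (a ^ p + (b + d) ^ p) * hsum.symm
  linarith

private lemma key8 {p k x s : ℝ} (hp0 : 0 ≤ p) (hp1 : p ≤ 1) (hk : 0 < k)
    (hx : 0 ≤ x) (hs : 0 ≤ s) (hsk : s ≤ k * x) :
    (x + s) ^ p ≤ x ^ p + ((1 + k) ^ p - 1) / k ^ p * s ^ p := by
  rcases eq_or_lt_of_le hp0 with rfl | hp0'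
  · simp
  rcases eq_or_lt_of_le hs with rfl | hs'
  · simp [Real.zero_rpow (ne_of_gt hp0')]
  have hx' : 0 < x := by nlinarith
  set t : ℝ := s / x with ht
  have ht0 : 0 < t := div_pos hs' hx'
  have htk : t ≤ k := (div_le_iff₀ hx').2 (by linarith)
  have H := incr8 hp0 hp1 ht0.le (show t ≤ t + t * k by nlinarith)
    (show (0:ℝ) ≤ k - t by linarith)
  have e1 : t + t * k + (k - t) = k * (1 + t) := by ring
  have e2 : t + (k - t) = k := by ring
  have e3 : t + t * k = t * (1 + k) := by ring
  rw [e1, e2, e3, Real.mul_rpow hk.le (by linarith), Real.mul_rpow ht0.le (by linarith)] at H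
  have hkp : 0 < k ^ p := Real.rpow_pos_of_pos hk p
  have step : (1 + t) ^ p ≤ 1 + ((1 + k) ^ p - 1) / k ^ p * t ^ p := by
    rw [div_mul_eq_mul_div, ← sub_le_iff_le_add', le_div_iff₀ hkp]
    nlinarith [H]
  have hxp : 0 ≤ x ^ p := Real.rpow_nonneg hx p
  have ex : x + s = x * (1 + t) := by rw [ht]; field_simp
  have es : s = x * t := by rw [ht]; field_simp
  rw [ex, Real.mul_rpow hx'.le (by linarith), es, Real.mul_rpow hx'.le ht0.le]
  calc x ^ p * (1 + t) ^ p ≤ x ^ p * (1 + ((1 + k) ^ p - 1) / k ^ p * t ^ p) :=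
        mul_le_mul_of_nonneg_left step hxp
    _ = x ^ p + ((1 + k) ^ p - 1) / k ^ p * (x ^ p * t ^ p) := by ring

private lemma main8 {k p : ℝ} (hk0 : 0 < k) (hp0 : 0 ≤ p) (hp1 : p ≤ 1) :
    ∀ M : ℕ, 1 ≤ M → ∀ c : ℝ, ∀ a : ℕ → ℝ, 0 ≤ c → (∀ i ∈ Finset.Icc 1 M, 0 ≤ a i) →
    c ^ 2 ≤ ∑ i ∈ Finset.Icc 1 M, (a i) ^ 2 →
    (∀ i ∈ Finset.Icc 1 (M - 1), k * (a i) ^ 2 ≥ ∑ j ∈ Finset.Icc (i + 1) M, (a j) ^ 2) →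
    ((c ^ 2 : ℝ)) ^ p ≤ ∑ i ∈ Finset.Icc 1 M,
      (((1 + k) ^ p - 1) / k ^ p) ^ (i - 1) * (((a i) ^ 2 : ℝ)) ^ p := by
  intro M
  induction M with
  | zero => omega
  | succ M ih =>
    intro hM c a hc ha hpoly hcond
    by_cases hM0 : M = 0
    · subst hM0
      simp only [Finset.Icc_self, Finset.sum_singleton] at hpoly ⊢
      simpa using Real.rpow_le_rpow (sq_nonneg c) hpoly hp0
    have hM1 : 1 ≤ M := Nat.one_le_iff_ne_zero.2 hM0
    set h : ℝ := ((1 + k) ^ p - 1) / k ^ p with hhdef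
    have hh : 0 ≤ h := by
      have h1 : (1:ℝ) ≤ (1 + k) ^ p := Real.one_le_rpow (by linarith) hp0
      exact div_nonneg (by linarith) (Real.rpow_nonneg hk0.le p)
    set S : ℝ := ∑ j ∈ Finset.Icc 2 (M + 1), (a j) ^ 2 with hSdef
    have hS0 : 0 ≤ S := Finset.sum_nonneg fun j _ => sq_nonneg _
    have hins : Finset.Icc 1 (M + 1) = insert 1 (Finset.Icc 2 (M + 1)) := by
      ext x; simp only [Finset.mem_Icc, Finset.mem_insert]; omega
    have hsplit : ∑ i ∈ Finset.Icc 1 (M + 1), (a i) ^ 2 = (a 1) ^ 2 + S := by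
      rw [hins, Finset.sum_insert (by simp)]
    have h1c : k * (a 1) ^ 2 ≥ S := by
      have := hcond 1 (by simp only [Finset.mem_Icc]; omega)
      simpa using this
    have hkey : ((a 1) ^ 2 + S) ^ p ≤ ((a 1) ^ 2) ^ p + h * S ^ p :=
      key8 hp0 hp1 hk0 (sq_nonneg _) hS0 h1c
    have hc2 : ((c ^ 2 : ℝ)) ^ p ≤ ((a 1) ^ 2 + S) ^ p :=
      Real.rpow_le_rpow (sq_nonneg c) (by rw [← hsplit]; exact hpoly) hp0
    have hshiftS : S = ∑ i ∈ Finset.Icc 1 M, (a (i + 1)) ^ 2 := by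
      rw [hSdef]; exact sum_shift8 (fun j => (a j) ^ 2) 1 M
    have hIH := ih hM1 (Real.sqrt S) (fun i => a (i + 1)) (Real.sqrt_nonneg S)
      (fun i hi => by
        refine ha (i + 1) ?_
        simp only [Finset.mem_Icc] at hi ⊢; omega)
      (by rw [Real.sq_sqrt hS0, ← hshiftS])
      (by
        intro i hi
        simp only [Finset.mem_Icc] at hi
        have hmem : i + 1 ∈ Finset.Icc 1 (M + 1 - 1) := by
          simp only [Finset.mem_Icc]; omega
        have := hcond (i + 1) hmem
        have hsh : ∑ j ∈ Finset.Icc (i + 1 + 1) (M + 1), (a j) ^ 2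
            = ∑ j ∈ Finset.Icc (i + 1) M, (a (j + 1)) ^ 2 :=
          sum_shift8 (fun j => (a j) ^ 2) (i + 1) M
        rw [hsh] at this
        exact this)
    rw [Real.sq_sqrt hS0] at hIH
    have hmul : h * S ^ p ≤ h * ∑ i ∈ Finset.Icc 1 M, h ^ (i - 1) * ((a (i + 1)) ^ 2) ^ p :=
      mul_le_mul_of_nonneg_left hIH hh
    have hsum2 : h * ∑ i ∈ Finset.Icc 1 M, h ^ (i - 1) * ((a (i + 1)) ^ 2) ^ p
        = ∑ i ∈ Finset.Icc 1 M, h ^ i * ((a (i + 1)) ^ 2) ^ p := by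
      rw [Finset.mul_sum]
      refine Finset.sum_congr rfl fun i hi => ?_
      simp only [Finset.mem_Icc] at hi
      rw [← mul_assoc]
      congr 1
      rw [← pow_succ', Nat.sub_add_cancel hi.1]
    have goalsplit : ∑ i ∈ Finset.Icc 1 (M + 1), h ^ (i - 1) * ((a i) ^ 2) ^ p
        = ((a 1) ^ 2) ^ p + ∑ i ∈ Finset.Icc 1 M, h ^ i * ((a (i + 1)) ^ 2) ^ p := by
      rw [hins, Finset.sum_insert (by simp),
        sum_shift8 (fun j => h ^ (j - 1) * ((a j) ^ 2) ^ p) 1 M]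
      simp
    rw [goalsplit]
    rw [hsum2] at hmul
    linarith

theorem stmt_8 (k β : ℝ) (hk0 : 0 < k) (hk1 : k ≤ 1) (hβ0 : 0 ≤ β) (hβ2 : β ≤ 2)
    (N : ℕ) (hN : 2 ≤ N) (c : ℝ) (a : ℕ → ℝ)
    (hc : 0 ≤ c) (ha : ∀ i ∈ Finset.Icc 1 (N - 1), 0 ≤ a i)
    (hpoly : c ^ 2 ≤ ∑ i ∈ Finset.Icc 1 (N - 1), (a i) ^ 2)
    (hcond : ∀ i ∈ Finset.Icc 1 (N - 2),
      k * (a i) ^ 2 ≥ ∑ j ∈ Finset.Icc (i + 1) (N - 1), (a j) ^ 2) :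
    c ^ β ≤ ∑ i ∈ Finset.Icc 1 (N - 1),
      (((1 + k) ^ (β / 2) - 1) / k ^ (β / 2)) ^ (i - 1) * (a i) ^ β := by
  have hp0 : 0 ≤ β / 2 := by linarith
  have hp1 : β / 2 ≤ 1 := by linarith
  have hM : 1 ≤ N - 1 := by omega
  have H := main8 hk0 hp0 hp1 (N - 1) hM c a hc ha hpoly
    (by
      intro i hi
      refine hcond i ?_
      rwa [show N - 1 - 1 = N - 2 from by omega] at hi)
  have ec : ((c ^ 2 : ℝ)) ^ (β / 2) = c ^ β := by
    rw [← Real.rpow_natCast c 2, ← Real.rpow_mul hc]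
    congr 1; push_cast; ring
  calc c ^ β = ((c ^ 2 : ℝ)) ^ (β / 2) := ec.symm
    _ ≤ ∑ i ∈ Finset.Icc 1 (N - 1),
        (((1 + k) ^ (β / 2) - 1) / k ^ (β / 2)) ^ (i - 1) * (((a i) ^ 2 : ℝ)) ^ (β / 2) := H
    _ = _ := by
        refine Finset.sum_congr rfl fun i hi => ?_
        rw [← Real.rpow_natCast (a i) 2, ← Real.rpow_mul (ha i hi)]
        congr 2; push_cast; ring
end

section
/- Let f : [0,∞) → [0,∞) satisfy the superadditivity property f(x² + y²)^{√2} ≥ f(x²)^{√2} + f(y²)^{√2} for all x, y ≥ 0. Let 0 < k ≤ 1, β ≥ √2 and set t = β/√2. If k·f(x²)^{√2} ≥ f(y²)^{√2}, then f(x² + y²)^β ≥ f(x²)^β + ((1+k)^t - 1)/k^t · f(y²)^β. -/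
open Real

/-- Quadrilateral inequality for convex rpow: for `t ≥ 1`, `0 ≤ u ≤ v`, `0 ≤ c`,
`(u+c)^t - u^t ≤ (v+c)^t - v^t`. -/
lemma rpow_diff_mono_s9 {t u v c : ℝ} (ht : 1 ≤ t) (hu : 0 ≤ u) (huv : u ≤ v) (hc : 0 ≤ c) :
    (u + c) ^ t - u ^ t ≤ (v + c) ^ t - v ^ t := by
  have hv : 0 ≤ v := le_trans hu huv
  rcases eq_or_lt_of_le hc with hc0 | hc0
  · simp [← hc0]
  have hD : 0 < v + c - u := by linarith
  set s : ℝ := c / (v + c - u) with hs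
  have hs0 : 0 ≤ s := div_nonneg hc hD.le
  have hs1 : s ≤ 1 := by
    rw [hs, div_le_one hD]; linarith
  have hconv := convexOn_rpow ht
  have h1 : ((1 - s) • u + s • (v + c)) ^ t ≤ (1 - s) • (u ^ t) + s • ((v + c) ^ t) :=
    hconv.2 (Set.mem_Ici.mpr hu) (Set.mem_Ici.mpr (by linarith)) (by linarith) hs0 (by ring)
  have h2 : (s • u + (1 - s) • (v + c)) ^ t ≤ s • (u ^ t) + (1 - s) • ((v + c) ^ t) :=
    hconv.2 (Set.mem_Ici.mpr hu) (Set.mem_Ici.mpr (by linarith)) hs0 (by linarith) (by ring)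
  have e1 : (1 - s) • u + s • (v + c) = u + c := by
    rw [hs]; simp only [smul_eq_mul]; field_simp; ring
  have e2 : s • u + (1 - s) • (v + c) = v := by
    rw [hs]; simp only [smul_eq_mul]; field_simp; ring
  rw [e1] at h1; rw [e2] at h2
  simp only [smul_eq_mul] at h1 h2
  linarith

theorem stmt_9 (f : ℝ → ℝ) (hf : ∀ x : ℝ, 0 ≤ x → 0 ≤ f x)
    (hsuper : ∀ x y : ℝ, 0 ≤ x → 0 ≤ y →
      f (x ^ 2 + y ^ 2) ^ (Real.sqrt 2) ≥ f (x ^ 2) ^ (Real.sqrt 2) + f (y ^ 2) ^ (Real.sqrt 2))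
    (k β : ℝ) (hk0 : 0 < k) (hk1 : k ≤ 1) (hβ : Real.sqrt 2 ≤ β)
    (x y : ℝ) (hx : 0 ≤ x) (hy : 0 ≤ y)
    (hcond : k * f (x ^ 2) ^ (Real.sqrt 2) ≥ f (y ^ 2) ^ (Real.sqrt 2)) :
    f (x ^ 2 + y ^ 2) ^ β ≥
      f (x ^ 2) ^ β +
        ((1 + k) ^ (β / Real.sqrt 2) - 1) / k ^ (β / Real.sqrt 2) * f (y ^ 2) ^ β := by
  have hs2 : (0:ℝ) < Real.sqrt 2 := Real.sqrt_pos.mpr (by norm_num)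
  set t : ℝ := β / Real.sqrt 2 with htdef
  have ht1 : 1 ≤ t := (one_le_div hs2).mpr hβ
  set a : ℝ := f (x ^ 2) ^ (Real.sqrt 2) with ha
  set b : ℝ := f (y ^ 2) ^ (Real.sqrt 2) with hb
  have hfa : 0 ≤ f (x ^ 2) := hf _ (by positivity)
  have hfb : 0 ≤ f (y ^ 2) := hf _ (by positivity)
  have hfc : 0 ≤ f (x ^ 2 + y ^ 2) := hf _ (by positivity)
  have ha0 : 0 ≤ a := Real.rpow_nonneg hfa _
  have hb0 : 0 ≤ b := Real.rpow_nonneg hfb _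
  have hba : b / k ≤ a := (div_le_iff₀' hk0).mpr hcond
  -- key inequality on t-powers
  have key : (a + b) ^ t ≥ a ^ t + ((1 + k) ^ t - 1) / k ^ t * b ^ t := by
    have h := rpow_diff_mono_s9 ht1 (by positivity : (0:ℝ) ≤ b / k) hba hb0
    have e : b / k + b = b / k * (1 + k) := by field_simp
    rw [e, Real.mul_rpow (by positivity) (by positivity), Real.div_rpow hb0 hk0.le] at h
    have hkt : 0 < k ^ t := Real.rpow_pos_of_pos hk0 _
    have : ((1 + k) ^ t - 1) / k ^ t * b ^ t = b ^ t / k ^ t * (1 + k) ^ t - b ^ t / k ^ t := by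
      field_simp
    rw [ge_iff_le, this]
    linarith
  -- convert β-powers to t-powers of √2-powers
  have hst : Real.sqrt 2 * t = β := by
    rw [htdef, mul_div_cancel₀ β hs2.ne']
  have conv : ∀ z : ℝ, 0 ≤ f z → f z ^ β = (f z ^ Real.sqrt 2) ^ t := by
    intro z hz
    rw [← Real.rpow_mul hz, hst]
  rw [conv _ hfa, conv _ hfb, conv _ hfc]
  calc (f (x ^ 2 + y ^ 2) ^ Real.sqrt 2) ^ t ≥ (a + b) ^ t := by
        apply Real.rpow_le_rpow (by linarith) (hsuper x y hx hy) (by linarith)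
    _ ≥ a ^ t + ((1 + k) ^ t - 1) / k ^ t * b ^ t := key
end

section
/- Let 0 < k ≤ 1 and β ≥ √2 be real numbers with t = β/√2. Let e, e₁,…,e_{N-1} ≥ 0 satisfy e^{√2} ≥ e₁^{√2} + ⋯ + e_{N-1}^{√2}, and setting d_i^{√2} = e_{i+1}^{√2} + ⋯ + e_{N-1}^{√2}, assume k·e_i^{√2} ≥ d_i^{√2} for all i = 1,…,N-2. Then, with h = ((1+k)^t - 1)/k^t, we have e^β ≥ e₁^β + h·e₂^β + h²·e₃^β + ⋯ + h^{N-2}·e_{N-1}^β. -/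
open Finset

private lemma phi_hasDeriv (t : ℝ) (ht : 1 ≤ t) (u : ℝ) :
    HasDerivAt (fun u : ℝ => (u + 1) ^ t - u ^ t)
      (t * (u + 1) ^ (t - 1) - t * u ^ (t - 1)) u := by
  have h1 : HasDerivAt (fun u : ℝ => (u + 1) ^ t) (t * (u + 1) ^ (t - 1)) u := by
    have := (Real.hasDerivAt_rpow_const (x := u + 1) (p := t) (Or.inr ht)).comp u
      ((hasDerivAt_id u).add_const 1)
    simp only [mul_one] at this
    exact this
  exact h1.sub (Real.hasDerivAt_rpow_const (Or.inr ht))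

private lemma phi_mono (t : ℝ) (ht : 1 ≤ t) :
    MonotoneOn (fun u : ℝ => (u + 1) ^ t - u ^ t) (Set.Ici 0) := by
  have hd : ∀ u : ℝ, HasDerivAt (fun u : ℝ => (u + 1) ^ t - u ^ t)
      (t * (u + 1) ^ (t - 1) - t * u ^ (t - 1)) u := phi_hasDeriv t ht
  apply monotoneOn_of_deriv_nonneg (convex_Ici 0)
  · exact (Differentiable.continuous fun u => (hd u).differentiableAt).continuousOn
  · exact fun u _ => (hd u).differentiableAt.differentiableWithinAt
  · intro u hu
    rw [interior_Ici] at hu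
    rw [(hd u).deriv]
    have h1 : u ^ (t - 1) ≤ (u + 1) ^ (t - 1) :=
      Real.rpow_le_rpow (le_of_lt hu) (by linarith) (by linarith)
    nlinarith

private lemma key_ineq (t k : ℝ) (ht : 1 ≤ t) (hk0 : 0 < k) (x y : ℝ)
    (hx : 0 ≤ x) (hy : 0 ≤ y) (hxy : y ≤ k * x) :
    x ^ t + ((1 + k) ^ t - 1) / k ^ t * y ^ t ≤ (x + y) ^ t := by
  rcases eq_or_lt_of_le hy with h0 | hy0
  · rw [← h0, Real.zero_rpow (by positivity)]
    simp
  · have hx0 : 0 < x := by nlinarith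
    set s : ℝ := y / x with hs
    have hs0 : 0 < s := div_pos hy0 hx0
    have hsk : s ≤ k := by rw [div_le_iff₀ hx0]; linarith
    have hmono := phi_mono t ht (Set.mem_Ici.mpr (by positivity : (0:ℝ) ≤ 1/k))
      (Set.mem_Ici.mpr (by positivity : (0:ℝ) ≤ 1/s))
      (by apply one_div_le_one_div_of_le hs0 hsk)
    simp only at hmono
    -- k^t * φ(1/k) = (1+k)^t - 1
    have hkt : (0:ℝ) < k ^ t := Real.rpow_pos_of_pos hk0 t
    have hst : (0:ℝ) < s ^ t := Real.rpow_pos_of_pos hs0 t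
    have e1 : k ^ t * ((1/k + 1) ^ t - (1/k) ^ t) = (1 + k) ^ t - 1 := by
      rw [mul_sub, ← Real.mul_rpow hk0.le (by positivity), ← Real.mul_rpow hk0.le (by positivity),
        show k * (1/k + 1) = 1 + k by field_simp,
        show k * (1/k) = 1 by field_simp, Real.one_rpow]
    have e2 : s ^ t * ((1/s + 1) ^ t - (1/s) ^ t) = (1 + s) ^ t - 1 := by
      rw [mul_sub, ← Real.mul_rpow hs0.le (by positivity), ← Real.mul_rpow hs0.le (by positivity),
        show s * (1/s + 1) = 1 + s by field_simp,
        show s * (1/s) = 1 by field_simp, Real.one_rpow]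
    have hdiv : ((1 + k) ^ t - 1) / k ^ t = (1/k + 1) ^ t - (1/k) ^ t := by
      rw [← e1, mul_div_assoc]
      field_simp
    have hkey : 1 + ((1 + k) ^ t - 1) / k ^ t * s ^ t ≤ (1 + s) ^ t := by
      rw [hdiv]
      nlinarith [mul_le_mul_of_nonneg_left hmono hst.le]
    -- multiply by x^t
    have hxt : (0:ℝ) < x ^ t := Real.rpow_pos_of_pos hx0 t
    have hys : y = s * x := by rw [hs, div_mul_cancel₀ y hx0.ne']
    have e3 : (x + y) ^ t = x ^ t * (1 + s) ^ t := by
      rw [← Real.mul_rpow hx0.le (by positivity)]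
      congr 1
      rw [hys]; ring
    have e4 : y ^ t = x ^ t * s ^ t := by
      rw [hys, Real.mul_rpow hs0.le hx0.le]; ring
    rw [e3, e4]
    nlinarith [mul_le_mul_of_nonneg_left hkey hxt.le]

private lemma reidx (p q : ℕ) (f : ℕ → ℝ) :
    ∑ j ∈ Icc (p + 1) (q + 1), f j = ∑ j ∈ Icc p q, f (j + 1) := by
  rw [← Finset.map_add_right_Icc, Finset.sum_map]
  rfl

private lemma main_ind (t k h : ℝ) (ht : 1 ≤ t) (hk0 : 0 < k)
    (hh : h = ((1 + k) ^ t - 1) / k ^ t) (hh0 : 0 ≤ h) :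
    ∀ M : ℕ, 1 ≤ M → ∀ a : ℕ → ℝ,
      (∀ i ∈ Icc 1 M, 0 ≤ a i) →
      (∀ i ∈ Icc 1 (M - 1), (∑ j ∈ Icc (i + 1) M, a j) ≤ k * a i) →
      (∑ i ∈ Icc 1 M, h ^ (i - 1) * (a i) ^ t) ≤ (∑ i ∈ Icc 1 M, a i) ^ t := by
  intro M hM
  induction M, hM using Nat.le_induction with
  | base =>
    intro a ha hc
    rw [Finset.Icc_self, Finset.sum_singleton, Finset.sum_singleton]
    norm_num
  | succ M hM ih =>
    intro a ha hc
    set b : ℕ → ℝ := fun j => a (j + 1) with hb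
    have hb_nonneg : ∀ i ∈ Icc 1 M, 0 ≤ b i := by
      intro i hi
      simp only [mem_Icc] at hi
      exact ha (i + 1) (by simp only [mem_Icc]; omega)
    have hb_cond : ∀ i ∈ Icc 1 (M - 1), (∑ j ∈ Icc (i + 1) M, b j) ≤ k * b i := by
      intro i hi
      simp only [mem_Icc] at hi
      have := hc (i + 1) (by simp only [mem_Icc]; omega)
      rw [← reidx (i + 1) M a]
      exact this
    have hIH := ih b hb_nonneg hb_cond
    have hy0 : 0 ≤ ∑ i ∈ Icc 1 M, b i :=
      Finset.sum_nonneg hb_nonneg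
    have hsplit : ∑ i ∈ Icc 1 (M + 1), a i = a 1 + ∑ i ∈ Icc 1 M, b i := by
      rw [Finset.Icc_eq_cons_Ioc (by omega), Finset.sum_cons, ← Finset.Icc_add_one_left_eq_Ioc,
        reidx 1 M a]
    have hy_le : (∑ i ∈ Icc 1 M, b i) ≤ k * a 1 := by
      have := hc 1 (by simp only [mem_Icc]; omega)
      rw [← reidx 1 M a]
      exact this
    have ha1 : 0 ≤ a 1 := ha 1 (by simp only [mem_Icc]; omega)
    have hkey := key_ineq t k ht hk0 (a 1) (∑ i ∈ Icc 1 M, b i) ha1 hy0 hy_le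
    rw [← hh] at hkey
    have hlhs : (∑ i ∈ Icc 1 (M + 1), h ^ (i - 1) * (a i) ^ t)
        = (a 1) ^ t + h * ∑ i ∈ Icc 1 M, h ^ (i - 1) * (b i) ^ t := by
      rw [Finset.Icc_eq_cons_Ioc (by omega), Finset.sum_cons, ← Finset.Icc_add_one_left_eq_Ioc,
        reidx 1 M (fun i => h ^ (i - 1) * (a i) ^ t)]
      simp only [Nat.add_sub_cancel]
      rw [show (1:ℕ) - 1 = 0 from rfl, pow_zero, one_mul, Finset.mul_sum]
      congr 1
      apply Finset.sum_congr rfl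
      intro j hj
      simp only [mem_Icc] at hj
      rw [← mul_assoc, ← pow_succ']
      have hj1 : j - 1 + 1 = j := by omega
      rw [hj1]
    rw [hlhs, hsplit]
    have hstep : h * (∑ i ∈ Icc 1 M, h ^ (i - 1) * (b i) ^ t) ≤ h * (∑ i ∈ Icc 1 M, b i) ^ t :=
      mul_le_mul_of_nonneg_left hIH hh0
    linarith

theorem stmt_10 (k β : ℝ) (hk0 : 0 < k) (hk1 : k ≤ 1) (hβ : Real.sqrt 2 ≤ β)
    (N : ℕ) (hN : 2 ≤ N) (e : ℝ) (a : ℕ → ℝ)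
    (he : 0 ≤ e) (ha : ∀ i ∈ Finset.Icc 1 (N - 1), 0 ≤ a i)
    (hmono : e ^ (Real.sqrt 2) ≥ ∑ i ∈ Finset.Icc 1 (N - 1), (a i) ^ (Real.sqrt 2))
    (hcond : ∀ i ∈ Finset.Icc 1 (N - 2),
      k * (a i) ^ (Real.sqrt 2) ≥ ∑ j ∈ Finset.Icc (i + 1) (N - 1), (a j) ^ (Real.sqrt 2)) :
    e ^ β ≥ ∑ i ∈ Finset.Icc 1 (N - 1),
      (((1 + k) ^ (β / Real.sqrt 2) - 1) / k ^ (β / Real.sqrt 2)) ^ (i - 1) * (a i) ^ β := by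
  have hs2 : (0:ℝ) < Real.sqrt 2 := Real.sqrt_pos.mpr (by norm_num)
  set t : ℝ := β / Real.sqrt 2 with htdef
  have ht : 1 ≤ t := (one_le_div hs2).mpr hβ
  have hst : Real.sqrt 2 * t = β := mul_div_cancel₀ β hs2.ne'
  set h : ℝ := ((1 + k) ^ t - 1) / k ^ t with hhdef
  have hh0 : 0 ≤ h := by
    apply div_nonneg _ (Real.rpow_pos_of_pos hk0 t).le
    have : (1:ℝ) ≤ (1 + k) ^ t :=
      Real.one_le_rpow (by linarith) (by linarith)
    linarith
  have hmain := main_ind t k h ht hk0 hhdef hh0 (N - 1) (by omega)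
    (fun i => (a i) ^ (Real.sqrt 2))
    (fun i hi => Real.rpow_nonneg (ha i hi) _)
    (by
      intro i hi
      have h2 : N - 1 - 1 = N - 2 := by omega
      rw [h2] at hi
      exact hcond i hi)
  have hpow : ∀ i ∈ Finset.Icc 1 (N - 1), ((a i) ^ (Real.sqrt 2)) ^ t = (a i) ^ β := by
    intro i hi
    rw [← Real.rpow_mul (ha i hi), hst]
  calc ∑ i ∈ Finset.Icc 1 (N - 1), h ^ (i - 1) * (a i) ^ β
      = ∑ i ∈ Finset.Icc 1 (N - 1), h ^ (i - 1) * ((a i) ^ (Real.sqrt 2)) ^ t := by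
        exact Finset.sum_congr rfl fun i hi => by rw [hpow i hi]
    _ ≤ (∑ i ∈ Finset.Icc 1 (N - 1), (a i) ^ (Real.sqrt 2)) ^ t := hmain
    _ ≤ (e ^ (Real.sqrt 2)) ^ t := by
        apply Real.rpow_le_rpow
          (Finset.sum_nonneg fun i hi => Real.rpow_nonneg (ha i hi) _) hmono (by linarith)
    _ = e ^ β := by rw [← Real.rpow_mul he, hst]
end

section
/- Let 0 < k ≤ 1 and β ≥ 1 be real numbers, and let a, b, c ≥ 0 satisfy c ≥ a + b and b ≤ k·a. Then c^β ≥ a^β + ((1+k)^β - 1)/k^β · b^β. -/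
lemma key_mono_13 (β : ℝ) (hβ : 1 ≤ β) :
    MonotoneOn (fun x : ℝ => (x + 1) ^ β - x ^ β) (Set.Ici 0) := by
  have hd : ∀ x : ℝ, HasDerivAt (fun x : ℝ => (x + 1) ^ β - x ^ β)
      (1 * β * (x + 1) ^ (β - 1) - 1 * β * x ^ (β - 1)) x := by
    intro x
    exact (((hasDerivAt_id x).add_const 1).rpow_const (Or.inr hβ)).sub
      ((hasDerivAt_id x).rpow_const (Or.inr hβ))
  apply monotoneOn_of_deriv_nonneg (convex_Ici 0)
  · exact fun x _ => (hd x).continuousAt.continuousWithinAt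
  · intro x _
    exact (hd x).differentiableAt.differentiableWithinAt
  · intro x hx
    rw [interior_Ici] at hx
    rw [(hd x).deriv]
    have hx0 : (0:ℝ) < x := hx
    have h1 : x ^ (β - 1) ≤ (x + 1) ^ (β - 1) :=
      Real.rpow_le_rpow hx0.le (by linarith) (by linarith)
    nlinarith

theorem stmt_13 (k β a b c : ℝ) (hk0 : 0 < k) (hk1 : k ≤ 1) (hβ : 1 ≤ β)
    (ha : 0 ≤ a) (hb : 0 ≤ b) (hc : 0 ≤ c)
    (hmono : c ≥ a + b) (hcond : b ≤ k * a) :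
    c ^ β ≥ a ^ β + ((1 + k) ^ β - 1) / k ^ β * b ^ β := by
  have hβ0 : (0:ℝ) < β := by linarith
  have hkβ : (0:ℝ) < k ^ β := Real.rpow_pos_of_pos hk0 β
  rcases eq_or_lt_of_le hb with hb0 | hb0
  · -- b = 0 case
    rw [← hb0, Real.zero_rpow hβ0.ne', mul_zero, add_zero]
    exact Real.rpow_le_rpow ha (by linarith) hβ0.le
  · -- b > 0 case
    have ha0 : 0 < a := by nlinarith
    set t : ℝ := b / a with hT
    have ht0 : 0 < t := div_pos hb0 ha0
    have htk : t ≤ k := by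
      rw [hT, div_le_iff₀ ha0]
      linarith [mul_comm k a]
    -- monotonicity at 1/k ≤ 1/t
    have hmono' := key_mono_13 β hβ (Set.mem_Ici.mpr (by positivity : (0:ℝ) ≤ 1 / k))
      (Set.mem_Ici.mpr (by positivity : (0:ℝ) ≤ 1 / t))
      (one_div_le_one_div_of_le ht0 htk)
    simp only at hmono'
    have e1 : (1 / k + 1) ^ β * k ^ β = (1 + k) ^ β := by
      rw [← Real.mul_rpow (by positivity) hk0.le]
      congr 1; field_simp
    have e2 : (1 / k) ^ β * k ^ β = 1 := by
      rw [← Real.mul_rpow (by positivity) hk0.le]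
      rw [one_div_mul_cancel hk0.ne', Real.one_rpow]
    have e3 : (1 / t + 1) ^ β * t ^ β = (1 + t) ^ β := by
      rw [← Real.mul_rpow (by positivity) ht0.le]
      congr 1; field_simp
    have e4 : (1 / t) ^ β * t ^ β = 1 := by
      rw [← Real.mul_rpow (by positivity) ht0.le]
      rw [one_div_mul_cancel ht0.ne', Real.one_rpow]
    have e1' : (1 / k + 1) ^ β * k ^ β * t ^ β = (1 + k) ^ β * t ^ β := by rw [e1]
    have e2' : (1 / k) ^ β * k ^ β * t ^ β = t ^ β := by rw [e2, one_mul]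
    have e3' : (1 / t + 1) ^ β * t ^ β * k ^ β = (1 + t) ^ β * k ^ β := by rw [e3]
    have e4' : (1 / t) ^ β * t ^ β * k ^ β = k ^ β := by rw [e4, one_mul]
    have htβ : (0:ℝ) < t ^ β := Real.rpow_pos_of_pos ht0 β
    have M := mul_le_mul_of_nonneg_right hmono' (by positivity : (0:ℝ) ≤ t ^ β * k ^ β)
    have key : ((1 + k) ^ β - 1) * t ^ β ≤ ((1 + t) ^ β - 1) * k ^ β := by
      nlinarith [M, e1', e2', e3', e4']
    -- (1+t)^β ≥ 1 + C * t^β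
    have hstep : 1 + ((1 + k) ^ β - 1) / k ^ β * t ^ β ≤ (1 + t) ^ β := by
      rw [div_mul_eq_mul_div, ← sub_nonneg]
      have : ((1 + t) ^ β - 1) - ((1 + k) ^ β - 1) * t ^ β / k ^ β
          = (((1 + t) ^ β - 1) * k ^ β - ((1 + k) ^ β - 1) * t ^ β) / k ^ β := by
        field_simp
      rw [show (1 + t) ^ β - (1 + ((1 + k) ^ β - 1) * t ^ β / k ^ β)
          = ((1 + t) ^ β - 1) - ((1 + k) ^ β - 1) * t ^ β / k ^ β by ring, this]
      exact div_nonneg (by linarith) hkβ.le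
    have hab : a + b = a * (1 + t) := by
      rw [hT]; field_simp
    have hcab : (a + b) ^ β ≤ c ^ β :=
      Real.rpow_le_rpow (by linarith) hmono hβ0.le
    have habβ : (a + b) ^ β = a ^ β * (1 + t) ^ β := by
      rw [hab, Real.mul_rpow ha0.le (by linarith)]
    have haβ : (0:ℝ) < a ^ β := Real.rpow_pos_of_pos ha0 β
    have hbt : a ^ β * t ^ β = b ^ β := by
      rw [← Real.mul_rpow ha0.le ht0.le, hT, mul_div_cancel₀ b ha0.ne']
    have hfin : a ^ β + ((1 + k) ^ β - 1) / k ^ β * b ^ β ≤ a ^ β * (1 + t) ^ β := by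
      have h2 := mul_le_mul_of_nonneg_left hstep haβ.le
      calc a ^ β + ((1 + k) ^ β - 1) / k ^ β * b ^ β
          = a ^ β * (1 + ((1 + k) ^ β - 1) / k ^ β * t ^ β) := by
            rw [mul_add, mul_one]
            rw [show a ^ β * (((1 + k) ^ β - 1) / k ^ β * t ^ β)
                = ((1 + k) ^ β - 1) / k ^ β * (a ^ β * t ^ β) by ring, hbt]
        _ ≤ a ^ β * (1 + t) ^ β := h2
    calc a ^ β + ((1 + k) ^ β - 1) / k ^ β * b ^ β
        ≤ a ^ β * (1 + t) ^ β := hfin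
      _ = (a + b) ^ β := habβ.symm
      _ ≤ c ^ β := hcab
end

section
/- Let 0 < k ≤ 1 and 0 ≤ β ≤ 1 be real numbers, and let a, b, c ≥ 0 satisfy c ≤ a + b and b ≤ k·a. Then c^β ≤ a^β + ((1+k)^β - 1)/k^β · b^β. -/
open Real Finset

lemma key_14 (k β x : ℝ) (hk : 0 < k) (hβ : 0 < β) (hβ1 : β ≤ 1)
    (hx : 0 ≤ x) (hxk : x ≤ k) :
    (1 + x) ^ β ≤ 1 + ((1 + k) ^ β - 1) / k ^ β * x ^ β := by
  set p : ℝ := 1 / β with hp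
  have hp1 : 1 ≤ p := by
    rw [hp]
    rw [le_div_iff₀ hβ]
    linarith
  set t : ℝ := (x / k) ^ β with ht
  have htnn : 0 ≤ t := Real.rpow_nonneg (by positivity) _
  have ht1 : t ≤ 1 := Real.rpow_le_one (by positivity) (by
    rw [div_le_one hk]; exact hxk) hβ.le
  have hβp : β * p = 1 := by rw [hp, mul_one_div_cancel hβ.ne']
  -- Minkowski with f = ![1-t, 0], g = ![t, x^β]
  have hmink := Real.Lp_add_le_of_nonneg (f := ![1 - t, 0]) (g := ![t, x ^ β])
    (Finset.univ : Finset (Fin 2)) hp1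
    (by intro i _; fin_cases i <;> norm_num <;> linarith)
    (by intro i _; fin_cases i <;> norm_num [htnn, Real.rpow_nonneg hx])
  simp only [Fin.sum_univ_two, Matrix.cons_val_zero, Matrix.cons_val_one, Matrix.head_cons] at hmink
  have hpne : p ≠ 0 := by positivity
  have hβeq : 1 / p = β := by rw [hp, one_div_one_div]
  have htp : t ^ p = x / k := by
    rw [ht, ← Real.rpow_mul (by positivity), hβp, Real.rpow_one]
  have e1 : (1 - t + t) ^ p + (0 + x ^ β) ^ p = 1 + x := by
    rw [sub_add_cancel, Real.one_rpow, zero_add, ← Real.rpow_mul hx, hβp, Real.rpow_one]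
  have e2 : ((1 - t) ^ p + (0:ℝ) ^ p) ^ (1 / p) = 1 - t := by
    rw [Real.zero_rpow hpne, add_zero, ← Real.rpow_mul (by linarith : (0:ℝ) ≤ 1 - t),
      mul_one_div_cancel hpne, Real.rpow_one]
  have e3 : (t ^ p + (x ^ β) ^ p) ^ (1 / p) = t * (1 + k) ^ β := by
    rw [htp, ← Real.rpow_mul hx, hβp, Real.rpow_one,
      show x / k + x = (x / k) * (1 + k) by field_simp,
      Real.mul_rpow (by positivity) (by positivity), hβeq, ht]
  rw [e1, e2, e3, hβeq] at hmink
  have htval : t = x ^ β / k ^ β := by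
    rw [ht, Real.div_rpow hx hk.le]
  have hineq : 1 - t + t * (1 + k) ^ β = 1 + ((1 + k) ^ β - 1) / k ^ β * x ^ β := by
    rw [htval]; field_simp; ring
  linarith [hmink, hineq.ge]

theorem stmt_14 (k β a b c : ℝ) (hk0 : 0 < k) (hk1 : k ≤ 1) (hβ0 : 0 ≤ β) (hβ1 : β ≤ 1)
    (ha : 0 ≤ a) (hb : 0 ≤ b) (hc : 0 ≤ c)
    (hpoly : c ≤ a + b) (hcond : b ≤ k * a) :
    c ^ β ≤ a ^ β + ((1 + k) ^ β - 1) / k ^ β * b ^ β := by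
  rcases eq_or_lt_of_le hβ0 with hβ | hβ
  · simp [← hβ]
  rcases eq_or_lt_of_le ha with ha0 | ha0
  · have hb0 : b = 0 := le_antisymm (by rw [← ha0] at hcond; linarith) hb
    have hc0 : c = 0 := le_antisymm (by linarith) hc
    subst hb0 hc0
    rw [Real.zero_rpow hβ.ne', mul_zero, add_zero]
    exact Real.rpow_nonneg ha β
  · have hba : b / a ≤ k := by rw [div_le_iff₀ ha0]; linarith [mul_comm k a]
    have hkey := key_14 k β (b / a) hk0 hβ hβ1 (by positivity) hba
    have h1 : c ^ β ≤ (a + b) ^ β := Real.rpow_le_rpow hc hpoly hβ0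
    have h2 : (a + b) ^ β = a ^ β * (1 + b / a) ^ β := by
      rw [← Real.mul_rpow ha0.le (by positivity)]
      rw [mul_add, mul_one, mul_div_cancel₀ _ ha0.ne']
    have h3 : a ^ β * (b / a) ^ β = b ^ β := by
      rw [Real.div_rpow hb ha0.le, mul_div_cancel₀]
      exact (Real.rpow_pos_of_pos ha0 β).ne'
    calc c ^ β ≤ a ^ β * (1 + b / a) ^ β := by rw [← h2]; exact h1
      _ ≤ a ^ β * (1 + ((1 + k) ^ β - 1) / k ^ β * (b / a) ^ β) := by
          apply mul_le_mul_of_nonneg_left hkey (Real.rpow_nonneg ha0.le β)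
      _ = a ^ β + ((1 + k) ^ β - 1) / k ^ β * b ^ β := by
          rw [mul_add, mul_one]
          rw [show a ^ β * (((1 + k) ^ β - 1) / k ^ β * (b / a) ^ β)
            = ((1 + k) ^ β - 1) / k ^ β * (a ^ β * (b / a) ^ β) by ring, h3]
end

section
/- Let 0 < k ≤ 1, β ≥ 1, and integers N ≥ 4, 1 ≤ m ≤ N-3. Let T, T₁,…,T_{N-1} ≥ 0 satisfy T ≥ T₁ + ⋯ + T_{N-1} and, setting S_i = T_{i+1} + ⋯ + T_{N-1}, assume k·T_i ≥ S_i for i = 1,…,m and T_j ≤ k·S_j for j = m+1,…,N-2. Then with h = ((1+k)^β - 1)/k^β: T^β ≥ T₁^β + h·T₂^β + ⋯ + h^{m-1}·T_m^β + h^{m+1}·(T_{m+1}^β + ⋯ + T_{N-2}^β) + h^m·T_{N-1}^β. -/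
lemma mono_aux15 (β : ℝ) (hβ : 1 ≤ β) (s : ℝ) (hs : 0 ≤ s) :
    MonotoneOn (fun u : ℝ => (u + s) ^ β - u ^ β) (Set.Ici 0) := by
  have hder : ∀ u : ℝ, HasDerivAt (fun u : ℝ => (u + s) ^ β - u ^ β)
      (β * (u + s) ^ (β - 1) - β * u ^ (β - 1)) u := by
    intro u
    have h1 : HasDerivAt (fun u : ℝ => (u + s) ^ β) (β * (u + s) ^ (β - 1) * 1) u := by
      exact (Real.hasDerivAt_rpow_const (Or.inr hβ)).comp u ((hasDerivAt_id u).add_const s)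
    have h2 : HasDerivAt (fun u : ℝ => u ^ β) (β * u ^ (β - 1)) u :=
      Real.hasDerivAt_rpow_const (Or.inr hβ)
    have h3 := h1.sub h2
    simp only [mul_one] at h3
    exact h3
  apply monotoneOn_of_deriv_nonneg (convex_Ici 0)
  · exact fun u _ => (hder u).continuousAt.continuousWithinAt
  · exact fun u _ => (hder u).differentiableAt.differentiableWithinAt
  · intro u hu
    rw [interior_Ici] at hu
    rw [(hder u).deriv]
    have h3 : u ^ (β - 1) ≤ (u + s) ^ (β - 1) :=
      Real.rpow_le_rpow (le_of_lt hu) (by linarith) (by linarith)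
    have : (0:ℝ) ≤ β := by linarith
    nlinarith

lemma key15 (k β x y : ℝ) (hk0 : 0 < k) (hβ : 1 ≤ β) (hx : 0 ≤ x) (hy : 0 ≤ y)
    (hyx : y ≤ k * x) :
    x ^ β + ((1 + k) ^ β - 1) / k ^ β * y ^ β ≤ (x + y) ^ β := by
  have h0 : (0:ℝ) ≤ y / k := div_nonneg hy hk0.le
  have h1 : y / k ≤ x := by rw [div_le_iff₀ hk0]; linarith [mul_comm k x]
  have hm := mono_aux15 β hβ y hy (Set.mem_Ici.2 h0) (Set.mem_Ici.2 hx) h1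
  simp only at hm
  have e1 : y / k + y = (y / k) * (1 + k) := by field_simp
  have e2 : ((y / k) * (1 + k)) ^ β = (y / k) ^ β * (1 + k) ^ β :=
    Real.mul_rpow h0 (by linarith)
  have e3 : (y / k) ^ β = y ^ β / k ^ β := Real.div_rpow hy hk0.le β
  rw [e1, e2, e3] at hm
  have hkβ : (0:ℝ) < k ^ β := Real.rpow_pos_of_pos hk0 β
  have : ((1 + k) ^ β - 1) / k ^ β * y ^ β = y ^ β / k ^ β * (1 + k) ^ β - y ^ β / k ^ β := by
    field_simp
  linarith

theorem stmt_15 (k β : ℝ) (hk0 : 0 < k) (hk1 : k ≤ 1) (hβ : 1 ≤ β)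
    (N m : ℕ) (hN : 4 ≤ N) (hm1 : 1 ≤ m) (hm2 : m ≤ N - 3)
    (T : ℝ) (a : ℕ → ℝ)
    (hT : 0 ≤ T) (ha : ∀ i ∈ Finset.Icc 1 (N - 1), 0 ≤ a i)
    (hmono : T ≥ ∑ i ∈ Finset.Icc 1 (N - 1), a i)
    (hcond1 : ∀ i ∈ Finset.Icc 1 m,
      k * a i ≥ ∑ j ∈ Finset.Icc (i + 1) (N - 1), a j)
    (hcond2 : ∀ j ∈ Finset.Icc (m + 1) (N - 2),
      a j ≤ k * ∑ l ∈ Finset.Icc (j + 1) (N - 1), a l) :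
    T ^ β ≥
      (∑ i ∈ Finset.Icc 1 m, (((1 + k) ^ β - 1) / k ^ β) ^ (i - 1) * (a i) ^ β)
      + (((1 + k) ^ β - 1) / k ^ β) ^ (m + 1) *
          (∑ j ∈ Finset.Icc (m + 1) (N - 2), (a j) ^ β)
      + (((1 + k) ^ β - 1) / k ^ β) ^ m * (a (N - 1)) ^ β := by
  set hq : ℝ := ((1 + k) ^ β - 1) / k ^ β with hq_def
  have hqnn : 0 ≤ hq := by
    apply div_nonneg
    · have : (1:ℝ) = (1:ℝ) ^ β := (Real.one_rpow β).symm
      nlinarith [Real.rpow_le_rpow (by norm_num : (0:ℝ) ≤ 1)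
        (by linarith : (1:ℝ) ≤ 1 + k) (by linarith : (0:ℝ) ≤ β), Real.one_rpow β]
    · exact (Real.rpow_pos_of_pos hk0 β).le
  set S : ℕ → ℝ := fun i => ∑ j ∈ Finset.Icc i (N - 1), a j with S_def
  have hSnn : ∀ i, 1 ≤ i → 0 ≤ S i := by
    intro i hi
    apply Finset.sum_nonneg
    intro j hj
    simp only [Finset.mem_Icc] at hj
    exact ha j (Finset.mem_Icc.2 ⟨by omega, hj.2⟩)
  have hann : ∀ i, 1 ≤ i → i ≤ N - 1 → 0 ≤ a i := fun i h1 h2 =>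
    ha i (Finset.mem_Icc.2 ⟨h1, h2⟩)
  have Sdec : ∀ i, 1 ≤ i → i ≤ N - 1 → S i = a i + S (i + 1) := by
    intro i h1 h2
    have : Finset.Icc i (N - 1) = insert i (Finset.Icc (i + 1) (N - 1)) := by
      ext x; simp only [Finset.mem_Icc, Finset.mem_insert]; omega
    rw [S_def]
    simp only
    rw [this, Finset.sum_insert (by simp)]
  have hβ0 : (0:ℝ) ≤ β := by linarith
  -- Claim A
  have claimA : ∀ j, j ≤ m →
      (∑ l ∈ Finset.Icc 1 j, hq ^ (l - 1) * a l ^ β) + hq ^ j * (S (j + 1)) ^ β ≤ T ^ β := by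
    intro j
    induction j with
    | zero =>
      intro _
      simp only [show Finset.Icc 1 0 = (∅ : Finset ℕ) by simp, Finset.sum_empty, pow_zero,
        zero_add, one_mul]
      exact Real.rpow_le_rpow (hSnn 1 le_rfl) hmono hβ0
    | succ j ih =>
      intro hj1
      have ihj := ih (by omega)
      have hjN : j + 1 ≤ N - 1 := by omega
      have hc := hcond1 (j + 1) (Finset.mem_Icc.2 ⟨by omega, hj1⟩)
      have hkey := key15 k β (a (j + 1)) (S (j + 2)) hk0 hβ
        (hann (j + 1) (by omega) hjN) (hSnn (j + 2) (by omega)) (by simpa [S_def] using hc)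
      have hdec : S (j + 1) = a (j + 1) + S (j + 2) := Sdec (j + 1) (by omega) hjN
      rw [Finset.sum_Icc_succ_top (by omega : 1 ≤ j + 1)]
      have hmul : hq ^ j * (a (j + 1) ^ β + hq * S (j + 2) ^ β) ≤ hq ^ j * S (j + 1) ^ β := by
        apply mul_le_mul_of_nonneg_left _ (pow_nonneg hqnn j)
        rw [hdec]; exact hkey
      have e : hq ^ (j + 1 - 1) = hq ^ j := by norm_num
      rw [e]
      calc (∑ l ∈ Finset.Icc 1 j, hq ^ (l - 1) * a l ^ β) + hq ^ j * a (j + 1) ^ β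
            + hq ^ (j + 1) * S (j + 2) ^ β
          = (∑ l ∈ Finset.Icc 1 j, hq ^ (l - 1) * a l ^ β)
            + hq ^ j * (a (j + 1) ^ β + hq * S (j + 2) ^ β) := by ring
        _ ≤ (∑ l ∈ Finset.Icc 1 j, hq ^ (l - 1) * a l ^ β) + hq ^ j * S (j + 1) ^ β := by
            linarith
        _ ≤ T ^ β := ihj
  -- Claim B
  have claimB : ∀ r, m + 1 + r ≤ N - 1 →
      hq * (∑ l ∈ Finset.Icc (m + 1) (m + r), a l ^ β) + (S (m + 1 + r)) ^ β
        ≤ (S (m + 1)) ^ β := by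
    intro r
    induction r with
    | zero =>
      intro _
      simp [show Finset.Icc (m + 1) m = (∅ : Finset ℕ) by simp]
    | succ r ih =>
      intro hr
      have ihr := ih (by omega)
      have hjN : m + 1 + r ≤ N - 2 := by omega
      have hc := hcond2 (m + 1 + r) (Finset.mem_Icc.2 ⟨by omega, hjN⟩)
      have hkey := key15 k β (S (m + 1 + r + 1)) (a (m + 1 + r)) hk0 hβ
        (hSnn (m + 1 + r + 1) (by omega)) (hann (m + 1 + r) (by omega) (by omega))
        (by simpa [S_def] using hc)
      have hdec : S (m + 1 + r) = a (m + 1 + r) + S (m + 1 + r + 1) :=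
        Sdec (m + 1 + r) (by omega) (by omega)
      rw [show m + (r + 1) = m + r + 1 by ring, show m + 1 + (r + 1) = m + r + 1 + 1 by ring,
        Finset.sum_Icc_succ_top (by omega : m + 1 ≤ m + r + 1),
        show m + r + 1 = m + 1 + r by ring]
      have : S (m + 1 + r + 1) ^ β + hq * a (m + 1 + r) ^ β ≤ S (m + 1 + r) ^ β := by
        rw [hdec, add_comm (a (m + 1 + r))]; exact hkey
      linarith
  -- Combine
  have hA := claimA m le_rfl
  have hr1 : m + 1 + (N - m - 2) = N - 1 := by omega
  have hB := claimB (N - m - 2) (by omega)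
  rw [hr1] at hB
  have e4 : m + (N - m - 2) = N - 2 := by omega
  rw [e4] at hB
  have e5 : S (N - 1) = a (N - 1) := by
    rw [S_def]; simp
  rw [e5] at hB
  have hmul : hq ^ m * (hq * (∑ l ∈ Finset.Icc (m + 1) (N - 2), a l ^ β) + a (N - 1) ^ β)
      ≤ hq ^ m * S (m + 1) ^ β :=
    mul_le_mul_of_nonneg_left hB (pow_nonneg hqnn m)
  have e7 : hq ^ m * (hq * (∑ l ∈ Finset.Icc (m + 1) (N - 2), a l ^ β) + a (N - 1) ^ β)
      = hq ^ (m + 1) * (∑ l ∈ Finset.Icc (m + 1) (N - 2), a l ^ β) + hq ^ m * a (N - 1) ^ β := by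
    rw [pow_succ]; ring
  rw [e7] at hmul
  linarith
end

section
/- Let 0 < k ≤ 1 and β ≥ 2 be real numbers, and let a, b, c ≥ 0 satisfy c² ≥ a² + b², b² ≤ k·a², and a > 0. Then c^β ≥ a^β·(1 + ((1+k)^{β/2} - 1)/k^{β/2}·(b²/a²)^{β/2}), and this lower bound equals a^β + ((1+k)^{β/2} - 1)/k^{β/2}·b^β. -/
open Real Set

lemma shift_mono (m s : ℝ) (hm : 1 ≤ m) (hs : 0 ≤ s) :
    MonotoneOn (fun x : ℝ => (x + s) ^ m - x ^ m) (Ici (0:ℝ)) := by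
  have hcont : ContinuousOn (fun x : ℝ => (x + s) ^ m - x ^ m) (Ici (0:ℝ)) := by
    apply ContinuousOn.sub
    · exact (Real.continuous_rpow_const (by linarith)).comp
        (continuous_id.add continuous_const) |>.continuousOn
    · exact (Real.continuous_rpow_const (by linarith)).continuousOn
  apply monotoneOn_of_hasDerivWithinAt_nonneg (f' := fun x =>
      m * (x + s) ^ (m - 1) - m * x ^ (m - 1)) (convex_Ici 0) hcont
  · intro x hx
    have h1 : HasDerivAt (fun x : ℝ => (x + s) ^ m) (m * (x + s) ^ (m - 1)) x := by
      have := (Real.hasDerivAt_rpow_const (x := x + s) (p := m) (Or.inr hm)).comp x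
        ((hasDerivAt_id x).add_const s)
      simpa [Function.comp_def, mul_comm] using this
    have h2 : HasDerivAt (fun x : ℝ => x ^ m) (m * x ^ (m - 1)) x :=
      Real.hasDerivAt_rpow_const (Or.inr hm)
    exact (h1.sub h2).hasDerivWithinAt
  · intro x hx
    rw [interior_Ici] at hx
    have hx0 : (0:ℝ) ≤ x := le_of_lt hx
    have : x ^ (m-1) ≤ (x + s) ^ (m-1) :=
      Real.rpow_le_rpow hx0 (by linarith) (by linarith)
    nlinarith [this, hm]

lemma key_ineq_s19 (m k t : ℝ) (hm : 1 ≤ m) (hk : 0 < k) (ht0 : 0 ≤ t) (htk : t ≤ k) :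
    1 + ((1 + k) ^ m - 1) / k ^ m * t ^ m ≤ (1 + t) ^ m := by
  have hkm : (0:ℝ) < k ^ m := Real.rpow_pos_of_pos hk m
  rcases eq_or_lt_of_le ht0 with h0 | ht
  · rw [← h0]
    rw [Real.zero_rpow (by linarith)]
    simp
  · -- t > 0
    set l := k / t with hl
    have hl1 : 1 ≤ l := (one_le_div ht).mpr htk
    have hmono := shift_mono m k hm hk.le (mem_Ici.mpr zero_le_one)
      (mem_Ici.mpr (by linarith : (0:ℝ) ≤ l)) hl1
    simp only at hmono
    rw [Real.one_rpow] at hmono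
    -- hmono : (1+k)^m - 1 ≤ (l+k)^m - l^m
    have hlt : l + k = l * (1 + t) := by field_simp [hl]; rw [hl, mul_add, mul_one, div_mul_cancel₀ _ ht.ne']
    have hexp : (l + k) ^ m = l ^ m * (1 + t) ^ m := by
      rw [hlt, Real.mul_rpow (by linarith) (by linarith)]
    have hlm : l ^ m = k ^ m / t ^ m := by
      rw [hl, Real.div_rpow hk.le ht0]
    have htm : (0:ℝ) < t ^ m := Real.rpow_pos_of_pos ht m
    rw [hexp, hlm] at hmono
    have h2 := mul_le_mul_of_nonneg_right hmono htm.le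
    have e : (k^m/t^m*(1+t)^m - k^m/t^m)*t^m = k^m*((1+t)^m - 1) := by
      field_simp
    rw [e] at h2
    have h3 : ((1+k)^m - 1)/k^m * t^m ≤ (1+t)^m - 1 := by
      rw [div_mul_eq_mul_div, div_le_iff₀ hkm]
      nlinarith [h2]
    linarith

theorem stmt_19 (k β a b c : ℝ) (hk0 : 0 < k) (hk1 : k ≤ 1) (hβ : 2 ≤ β)
    (ha : 0 < a) (hb : 0 ≤ b) (hc : 0 ≤ c)
    (hmono : c ^ 2 ≥ a ^ 2 + b ^ 2) (hcond : b ^ 2 ≤ k * a ^ 2) :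
    c ^ β ≥ a ^ β * (1 + ((1 + k) ^ (β / 2) - 1) / k ^ (β / 2) * (b ^ 2 / a ^ 2) ^ (β / 2)) ∧
    a ^ β * (1 + ((1 + k) ^ (β / 2) - 1) / k ^ (β / 2) * (b ^ 2 / a ^ 2) ^ (β / 2)) =
      a ^ β + ((1 + k) ^ (β / 2) - 1) / k ^ (β / 2) * b ^ β := by
  set m := β / 2 with hm
  have hm1 : 1 ≤ m := by rw [hm]; linarith
  have ha2 : (0:ℝ) < a ^ 2 := by positivity
  set t := b ^ 2 / a ^ 2 with ht
  have ht0 : 0 ≤ t := by positivity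
  have htk : t ≤ k := by rw [ht, div_le_iff₀ ha2]; linarith
  -- a ^ β = (a^2) ^ m
  have hsq : ∀ x : ℝ, 0 ≤ x → x ^ β = (x ^ 2 : ℝ) ^ m := by
    intro x hx
    rw [← Real.rpow_natCast x 2, ← Real.rpow_mul hx]
    rw [hm]
    congr 1
    push_cast
    ring
  have haβ : a ^ β = (a ^ 2 : ℝ) ^ m := hsq a ha.le
  have hbβ : b ^ β = (b ^ 2 : ℝ) ^ m := hsq b hb
  have hcβ : c ^ β = (c ^ 2 : ℝ) ^ m := hsq c hc
  have hab : a ^ 2 + b ^ 2 = a ^ 2 * (1 + t) := by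
    rw [ht]; field_simp
  have hatm : (a ^ 2 : ℝ) ^ m * t ^ m = (b ^ 2 : ℝ) ^ m := by
    rw [← Real.mul_rpow ha2.le ht0, ht, mul_div_cancel₀ _ (ne_of_gt ha2)]
  constructor
  · have h1 : (a ^ 2 + b ^ 2 : ℝ) ^ m ≤ (c ^ 2 : ℝ) ^ m :=
      Real.rpow_le_rpow (by positivity) hmono (by linarith)
    have h2 : (a ^ 2 + b ^ 2 : ℝ) ^ m = (a ^ 2 : ℝ) ^ m * (1 + t) ^ m := by
      rw [hab, Real.mul_rpow ha2.le (by linarith)]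
    have h3 := key_ineq_s19 m k t hm1 hk0 ht0 htk
    have h4 : (0:ℝ) ≤ (a ^ 2 : ℝ) ^ m := by positivity
    calc a ^ β * (1 + ((1 + k) ^ m - 1) / k ^ m * t ^ m)
        ≤ a ^ β * (1 + t) ^ m := by
          rw [haβ]; exact mul_le_mul_of_nonneg_left h3 h4
      _ = (a ^ 2 + b ^ 2 : ℝ) ^ m := by rw [haβ, ← h2]
      _ ≤ (c ^ 2 : ℝ) ^ m := h1
      _ = c ^ β := hcβ.symm
  · rw [haβ, hbβ, mul_add, mul_one, ← mul_assoc, mul_comm ((a^2:ℝ)^m) _, mul_assoc, hatm]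
end
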